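/- Let F ∈ ℝ^{3×3} have proper singular value decomposition F = USVᵀ with S = diag[s₁,s₂,s₃], s₁ ≥ s₂ ≥ |s₃| ≥ 0, and let c : ℝ³ → ℝ be c(s₁,s₂,s₃) = ∫_{SO(3)} exp(tr(S Q)) dQ. Let θ₁, θ₂, θ₃ ∈ (0, π) be arbitrary rotation angles. Define the sigma points R₀ = UVᵀ and R_i(±θ_i) = U exp(±θ_i ê_i) Vᵀ for i ∈ {1,2,3}, and the weights w_i = (1/(4(1 − cos θ_i))) · [ (1/c(S))(∂c/∂s_i − ∂c/∂s_j − ∂c/∂s_k) + 1 ] for (i,j,k) ∈ 𝓘, and w₀ = 1 − 2(w₁ + w₂ + w₃). Then the weighted first moment of the sigma points equals the first moment of the matrix Fisher distribution: w₀ R₀ + Σ_{i=1}^{3} w_i (R_i(θ_i) + R_i(−θ_i)) = (1/c(F)) ∫_{SO(3)} R · exp(tr(FᵀR)) dR. -/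

import Mathlib

open MeasureTheory Matrix Real

noncomputable section

/-- The space of real 3×3 matrices. -/
abbrev M3 : Type := Matrix (Fin 3) (Fin 3) ℝ

instance : MeasurableSpace M3 := inferInstanceAs (MeasurableSpace (Fin 3 → Fin 3 → ℝ))

/-- The special orthogonal group SO(3), as a set of real 3×3 matrices. -/
def SO3 : Set M3 := {R | Rᵀ * R = 1 ∧ R.det = 1}

/-- The normalizing constant of the matrix Fisher distribution,
`c(F) = ∫_{SO(3)} exp(tr(Fᵀ R)) dR`. -/
noncomputable def mfC (μ : Measure M3) (F : M3) : ℝ :=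
  ∫ R, Real.exp (Fᵀ * R).trace ∂μ

/-- The normalizing constant as a function of the three diagonal parameters:
`c(s₁,s₂,s₃) = ∫_{SO(3)} exp(tr(diag[s₁,s₂,s₃]·Q)) dQ`. -/
noncomputable def cFun (μ : Measure M3) (s : Fin 3 → ℝ) : ℝ :=
  ∫ Q, Real.exp (Matrix.diagonal s * Q).trace ∂μ

/-- The hat map: the skew-symmetric matrix `x̂` satisfying `x̂ y = x × y`. -/
def hat (x : Fin 3 → ℝ) : M3 :=
  !![0, -x 2, x 1; x 2, 0, -x 0; -x 1, x 0, 0]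

open scoped Nat

set_option linter.unusedSectionVars false
set_option synthInstance.maxHeartbeats 1000000
set_option maxHeartbeats 1000000

instance : BorelSpace M3 := inferInstanceAs (BorelSpace (Fin 3 → Fin 3 → ℝ))

lemma pow_cycle {𝔸 : Type*} [Ring 𝔸] [Algebra ℝ 𝔸] (a : 𝔸) (ha : a * a * a = -a) :
    ∀ k : ℕ, a ^ (2 * (k + 1)) = ((-1 : ℝ) ^ k) • (a * a) := by
  intro k
  induction k with
  | zero => norm_num [pow_succ]
  | succ k ih =>
      have h4 : 2 * (k + 1 + 1) = 2 * (k + 1) + 2 := by ring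
      rw [h4, pow_add, ih, sq, smul_mul_assoc]
      have h5 : a * a * (a * a) = -(a * a) := by
        calc a * a * (a * a) = (a * a * a) * a := by rw [mul_assoc, mul_assoc, mul_assoc]
        _ = -a * a := by rw [ha]
        _ = -(a * a) := by rw [neg_mul]
      rw [h5, pow_succ]
      simp [smul_neg, neg_smul]

lemma exp_core {𝔸 : Type*} [NormedRing 𝔸] [NormedAlgebra ℝ 𝔸] [CompleteSpace 𝔸]
    (a : 𝔸) (ha : a * a * a = -a) (t : ℝ) :
    NormedSpace.exp (t • a) + NormedSpace.exp ((-t) • a) =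
      (2 : ℝ) • 1 + (2 * (1 - Real.cos t)) • (a * a) := by
  have h1 : HasSum (fun n : ℕ => ((n ! : ℝ)⁻¹ * t ^ n + (n ! : ℝ)⁻¹ * (-t) ^ n) • a ^ n)
      (NormedSpace.exp (t • a) + NormedSpace.exp ((-t) • a)) := by
    have e1 := NormedSpace.exp_series_hasSum_exp' (𝕂 := ℝ) (t • a)
    have e2 := NormedSpace.exp_series_hasSum_exp' (𝕂 := ℝ) ((-t) • a)
    have h := e1.add e2
    convert h using 2 with n
    rw [smul_pow, smul_pow, add_smul, smul_smul, smul_smul]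
  set f : ℕ → 𝔸 := fun n => ((n ! : ℝ)⁻¹ * t ^ n + (n ! : ℝ)⁻¹ * (-t) ^ n) • a ^ n with hf
  have hodd : HasSum (fun k : ℕ => f (2 * k + 1)) 0 := by
    have hz : (fun k : ℕ => f (2 * k + 1)) = fun _ => (0 : 𝔸) := by
      funext k
      simp only [hf]
      have : (-t) ^ (2 * k + 1) = -(t ^ (2 * k + 1)) := by
        rw [neg_pow]
        have : (-1 : ℝ) ^ (2 * k + 1) = -1 := by
          rw [pow_succ, pow_mul]; norm_num
        rw [this]; ring
      rw [this]; ring_nf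
      simp
    rw [hz]; exact hasSum_zero
  have hcos : HasSum (fun k : ℕ => (2 * (((2 * (k+1))! : ℝ))⁻¹ * t ^ (2 * (k+1))) * (-1:ℝ)^k)
      (2 * (1 - Real.cos t)) := by
    have hc := Real.hasSum_cos t
    have hc1 : HasSum (fun n : ℕ => (-1:ℝ) ^ (n+1) * t ^ (2 * (n+1)) / (((2 * (n+1))! : ℝ)))
        (Real.cos t - 1) := by
      have hiff := (hasSum_nat_add_iff
        (f := fun n : ℕ => (-1:ℝ) ^ n * t ^ (2 * n) / (((2 * n)! : ℝ))) 1 (g := Real.cos t - 1))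
      rw [hiff]
      simpa using hc
    have h2 := hc1.mul_left (-2)
    rw [show (-2:ℝ) * (Real.cos t - 1) = 2 * (1 - Real.cos t) by ring] at h2
    refine HasSum.congr_fun h2 ?hhh
    intro k
    field_simp
    ring
  have heven : HasSum (fun k : ℕ => f (2 * k))
      ((2:ℝ) • (1 : 𝔸) + (2 * (1 - Real.cos t)) • (a * a)) := by
    have htail : HasSum (fun k : ℕ => f (2 * (k + 1))) ((2 * (1 - Real.cos t)) • (a * a)) := by
      have hfun : (fun k : ℕ => f (2 * (k + 1))) =
          fun k => ((2 * (((2 * (k+1))! : ℝ))⁻¹ * t ^ (2 * (k+1))) * (-1:ℝ)^k) • (a * a) := by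
        funext k
        simp only [hf]
        rw [pow_cycle a ha k, smul_smul]
        congr 1
        have : (-t) ^ (2 * (k+1)) = t ^ (2 * (k+1)) := by
          rw [neg_pow]
          have : (-1:ℝ) ^ (2 * (k+1)) = 1 := by rw [pow_mul]; norm_num
          rw [this, one_mul]
        rw [this]; ring
      rw [hfun]
      exact hcos.smul_const (a * a)
    have h0 : f (2 * 0) = (2:ℝ) • (1 : 𝔸) := by
      simp only [hf]; norm_num [two_smul]
    have hz := HasSum.zero_add (f := fun k => f (2 * k)) (by simpa using htail)
    have h0' : f 0 = (2:ℝ) • (1 : 𝔸) := by simpa using h0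
    have hz2 : HasSum (fun k => f (2 * k)) (f 0 + (2 * (1 - Real.cos t)) • (a * a)) := hz
    rw [h0'] at hz2
    exact hz2
  have h2 := heven.even_add_odd hodd
  rw [add_zero] at h2
  exact h1.unique h2

lemma hat_single_cube (i : Fin 3) :
    hat (Pi.single i 1) * hat (Pi.single i 1) * hat (Pi.single i 1) = - hat (Pi.single i 1) := by
  fin_cases i <;> ext a b <;> fin_cases a <;> fin_cases b <;>
    simp [hat, Pi.single_apply, Matrix.mul_apply, Fin.sum_univ_three, Matrix.vecHead, Matrix.vecTail]

lemma hat_single_sq (i : Fin 3) :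
    hat (Pi.single i 1) * hat (Pi.single i 1) =
      Matrix.diagonal (fun m => if m = i then 0 else (-1 : ℝ)) := by
  fin_cases i <;> ext a b <;> fin_cases a <;> fin_cases b <;>
    simp [hat, Pi.single_apply, Matrix.mul_apply, Fin.sum_univ_three, Matrix.diagonal, Matrix.vecHead, Matrix.vecTail]

lemma exp_hat_sum (i : Fin 3) (t : ℝ) :
    NormedSpace.exp (t • hat (Pi.single i 1)) + NormedSpace.exp ((-t) • hat (Pi.single i 1)) =
      (2 : ℝ) • 1 + (2 * (1 - Real.cos t)) •
        Matrix.diagonal (fun m => if m = i then 0 else (-1 : ℝ)) := by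
  letI : SeminormedRing M3 := Matrix.linftyOpSemiNormedRing
  letI : NormedRing M3 := Matrix.linftyOpNormedRing
  letI : NormedAlgebra ℝ M3 := Matrix.linftyOpNormedAlgebra
  letI : CompleteSpace M3 := inferInstanceAs (CompleteSpace (Fin 3 → Fin 3 → ℝ))
  rw [← hat_single_sq i]
  exact exp_core _ (hat_single_cube i) t

variable {μ : Measure M3} [IsProbabilityMeasure μ]

lemma ae_so3 (hsupp : μ SO3ᶜ = 0) : ∀ᵐ R ∂μ, R ∈ SO3 := by
  rw [MeasureTheory.ae_iff]
  exact hsupp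

lemma integrable_of_so3_bound {E : Type*} [NormedAddCommGroup E]
    (hsupp : μ SO3ᶜ = 0) (f : M3 → E) (hf : AEStronglyMeasurable f μ) (C : ℝ)
    (hC : ∀ R ∈ SO3, ‖f R‖ ≤ C) : Integrable f μ := by
  refine Integrable.mono' (integrable_const C) hf ?_
  filter_upwards [ae_so3 hsupp] with R hR
  exact hC R hR

lemma map_conj (hleft : ∀ Q ∈ SO3, μ.map (fun R => Q * R) = μ)
    (hright : ∀ Q ∈ SO3, μ.map (fun R => R * Q) = μ)
    {P Q : M3} (hP : P ∈ SO3) (hQ : Q ∈ SO3) :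
    μ.map (fun R => P * R * Q) = μ := by
  have h1 : Measurable fun R : M3 => P * R :=
    (continuous_const.matrix_mul continuous_id).measurable
  have h2 : Measurable fun R : M3 => R * Q :=
    (continuous_id.matrix_mul continuous_const).measurable
  have : (fun R : M3 => P * R * Q) = (fun R => R * Q) ∘ (fun R => P * R) := rfl
  rw [this, ← MeasureTheory.Measure.map_map h2 h1, hleft P hP, hright Q hQ]

lemma so3_integral_conj {E : Type*} [NormedAddCommGroup E] [NormedSpace ℝ E]
    (hleft : ∀ Q ∈ SO3, μ.map (fun R => Q * R) = μ)
    (hright : ∀ Q ∈ SO3, μ.map (fun R => R * Q) = μ)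
    {P Q : M3} (hP : P ∈ SO3) (hQ : Q ∈ SO3) (f : M3 → E)
    (hf : AEStronglyMeasurable f μ) :
    ∫ R, f (P * R * Q) ∂μ = ∫ R, f R ∂μ := by
  have hmap := map_conj hleft hright hP hQ
  have hg : AEMeasurable (fun R : M3 => P * R * Q) μ :=
    ((continuous_const.matrix_mul continuous_id).matrix_mul continuous_const).measurable.aemeasurable
  rw [← MeasureTheory.integral_map hg (by rwa [hmap])]
  rw [hmap]

set_option synthInstance.maxHeartbeats 1000000

lemma trace_diag_mul (s : Fin 3 → ℝ) (R : M3) :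
    (Matrix.diagonal s * R).trace = ∑ m, s m * R m m := by
  simp [Matrix.trace, Matrix.diag, Matrix.diagonal_mul]

lemma cont_entry (p q : Fin 3) : Continuous fun R : M3 => R p q :=
  ((continuous_apply q).comp (continuous_apply p))

lemma cont_exp_trace (s : Fin 3 → ℝ) :
    Continuous fun R : M3 => Real.exp (Matrix.diagonal s * R).trace := by
  refine Real.continuous_exp.comp ?_
  simp only [trace_diag_mul]
  exact continuous_finset_sum _ fun m _ => (continuous_const.mul (cont_entry m m))

/-- The continuous linear functional `v ↦ ∑ j, R j j * v j`. -/
noncomputable def LR (R : M3) : (Fin 3 → ℝ) →L[ℝ] ℝ :=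
  ∑ j, R j j • ContinuousLinearMap.proj j

lemma LR_apply (R : M3) (v : Fin 3 → ℝ) : LR R v = ∑ j, R j j * v j := by
  simp [LR]

lemma LR_norm_le (R : M3) (h : ∀ a b, |R a b| ≤ 1) : ‖LR R‖ ≤ 3 := by
  refine ContinuousLinearMap.opNorm_le_bound _ (by norm_num) fun v => ?_
  rw [LR_apply]
  calc |∑ j, R j j * v j| ≤ ∑ j, |R j j * v j| := Finset.abs_sum_le_sum_abs _ _
    _ ≤ ∑ j : Fin 3, ‖v‖ := by
        refine Finset.sum_le_sum fun j _ => ?_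
        rw [abs_mul]
        calc |R j j| * |v j| ≤ 1 * ‖v‖ :=
          mul_le_mul (h j j) (norm_le_pi_norm v j) (abs_nonneg _) zero_le_one
        _ = ‖v‖ := one_mul _
    _ = 3 * ‖v‖ := by rw [Fin.sum_univ_three]; ring

lemma so3_entries {R : M3} (h : R ∈ SO3) : ∀ a b, |R a b| ≤ 1 := by
  intro a b
  obtain ⟨h1, _⟩ := h
  have hd := congrFun (congrFun h1 b) b
  simp [Matrix.mul_apply, Matrix.one_apply] at hd
  have hle : R a b * R a b ≤ 1 := by
    calc R a b * R a b ≤ ∑ k, R k b * R k b :=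
      Finset.single_le_sum (f := fun k => R k b * R k b) (fun k _ => mul_self_nonneg _) (Finset.mem_univ a)
    _ = 1 := hd
  nlinarith [abs_nonneg (R a b), abs_mul_abs_self (R a b)]

lemma hasFDerivAt_cFun (hsupp : μ SO3ᶜ = 0) (s : Fin 3 → ℝ) :
    HasFDerivAt (cFun μ)
      (∫ R, Real.exp (Matrix.diagonal s * R).trace • LR R ∂μ) s := by
  classical
  set bound : M3 → ℝ := fun _ => Real.exp (∑ m, (|s m| + 1)) * 3 with hbound
  have key := hasFDerivAt_integral_of_dominated_of_fderiv_le
    (𝕜 := ℝ) (μ := μ) (x₀ := s)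
    (F := fun x R => Real.exp (Matrix.diagonal x * R).trace)
    (F' := fun x R => Real.exp (Matrix.diagonal x * R).trace • LR R)
    (bound := bound) (s := Metric.ball s 1) (Metric.ball_mem_nhds s one_pos)
    (Filter.Eventually.of_forall fun x => (cont_exp_trace x).aestronglyMeasurable)
    (integrable_of_so3_bound hsupp _ (cont_exp_trace s).aestronglyMeasurable
      (Real.exp (∑ m, (|s m| + 1))) ?_)
    ?_ ?_ ?_ ?_
  · exact key
  · -- bound for F x₀
    intro R hR
    rw [Real.norm_eq_abs, Real.abs_exp, trace_diag_mul]
    refine Real.exp_le_exp.2 (Finset.sum_le_sum fun m _ => ?_)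
    have := so3_entries hR m m
    have h1 : s m * R m m ≤ |s m| := by
      calc s m * R m m ≤ |s m * R m m| := le_abs_self _
      _ = |s m| * |R m m| := abs_mul _ _
      _ ≤ |s m| * 1 := by nlinarith [abs_nonneg (s m)]
      _ = |s m| := mul_one _
    linarith
  · -- F' measurable at x₀
    refine Continuous.aestronglyMeasurable ?_
    refine Continuous.smul (cont_exp_trace s) ?_
    exact continuous_finset_sum _ fun j _ => (cont_entry j j).smul continuous_const
  · -- bound on F'
    filter_upwards [ae_so3 hsupp] with R hR
    intro x hx
    rw [norm_smul (Real.exp (Matrix.diagonal x * R).trace) (LR R), Real.norm_eq_abs,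
      Real.abs_exp, trace_diag_mul, hbound]
    have h1 : Real.exp (∑ m, x m * R m m) ≤ Real.exp (∑ m, (|s m| + 1)) := by
      refine Real.exp_le_exp.2 (Finset.sum_le_sum fun m _ => ?_)
      have hrm := so3_entries hR m m
      have hxm : |x m| ≤ |s m| + 1 := by
        have : |x m - s m| ≤ ‖x - s‖ := by
          simpa using norm_le_pi_norm (x - s) m
        have hdist : ‖x - s‖ < 1 := by
          simpa [dist_eq_norm] using Metric.mem_ball.1 hx
        calc |x m| = |s m + (x m - s m)| := by ring_nf
        _ ≤ |s m| + |x m - s m| := abs_add_le _ _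
        _ ≤ |s m| + 1 := by linarith
      calc x m * R m m ≤ |x m * R m m| := le_abs_self _
      _ = |x m| * |R m m| := abs_mul _ _
      _ ≤ (|s m| + 1) * 1 := by nlinarith [abs_nonneg (x m)]
      _ = |s m| + 1 := mul_one _
    have h2 : ‖LR R‖ ≤ 3 := LR_norm_le R (so3_entries hR)
    calc Real.exp (∑ m, x m * R m m) * ‖LR R‖
        ≤ Real.exp (∑ m, (|s m| + 1)) * 3 := by
          exact mul_le_mul h1 h2 (norm_nonneg _) (Real.exp_pos _).le
    _ = bound R := rfl
  · exact integrable_const _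
  · -- differentiability
    refine Filter.Eventually.of_forall fun R => ?_
    intro x hx
    have hL : HasFDerivAt (fun y : Fin 3 → ℝ => LR R y) (LR R) x := (LR R).hasFDerivAt
    have hfun : (fun y : Fin 3 → ℝ => (Matrix.diagonal y * R).trace) = fun y => LR R y := by
      funext y
      rw [trace_diag_mul, LR_apply]
      exact Finset.sum_congr rfl fun m _ => mul_comm _ _
    have hL' : HasFDerivAt (fun y : Fin 3 → ℝ => (Matrix.diagonal y * R).trace) (LR R) x := by
      rw [hfun]; exact hL
    simpa using hL'.exp

lemma cont_F' (s : Fin 3 → ℝ) :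
    Continuous (fun R : M3 => Real.exp (Matrix.diagonal s * R).trace • LR R) := by
  refine Continuous.smul (cont_exp_trace s) ?_
  exact continuous_finset_sum _ fun j _ => (cont_entry j j).smul continuous_const

lemma integrable_F' (hsupp : μ SO3ᶜ = 0) (s : Fin 3 → ℝ) :
    Integrable (fun R : M3 => Real.exp (Matrix.diagonal s * R).trace • LR R) μ := by
  refine integrable_of_so3_bound hsupp _ (cont_F' s).aestronglyMeasurable
    (Real.exp (∑ m, |s m|) * 3) ?_
  intro R hR
  rw [norm_smul (Real.exp (Matrix.diagonal s * R).trace) (LR R), Real.norm_eq_abs,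
    Real.abs_exp, trace_diag_mul]
  have h1 : Real.exp (∑ m, s m * R m m) ≤ Real.exp (∑ m, |s m|) := by
    refine Real.exp_le_exp.2 (Finset.sum_le_sum fun m _ => ?_)
    have hrm := so3_entries hR m m
    calc s m * R m m ≤ |s m * R m m| := le_abs_self _
    _ = |s m| * |R m m| := abs_mul _ _
    _ ≤ |s m| * 1 := by nlinarith [abs_nonneg (s m)]
    _ = |s m| := mul_one _
  exact mul_le_mul h1 (LR_norm_le R (so3_entries hR)) (norm_nonneg _) (Real.exp_pos _).le

lemma fderiv_cFun_single (hsupp : μ SO3ᶜ = 0) (s : Fin 3 → ℝ) (m : Fin 3) :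
    fderiv ℝ (cFun μ) s (Pi.single m 1) =
      ∫ R, Real.exp (Matrix.diagonal s * R).trace * R m m ∂μ := by
  rw [(hasFDerivAt_cFun hsupp s).fderiv]
  rw [ContinuousLinearMap.integral_apply (integrable_F' hsupp s) (Pi.single m 1)]
  congr 1
  funext R
  rw [ContinuousLinearMap.smul_apply, LR_apply]
  simp [Pi.single_apply, mul_ite, smul_eq_mul]

lemma J_offdiag (hsupp : μ SO3ᶜ = 0)
    (hleft : ∀ Q ∈ SO3, μ.map (fun R => Q * R) = μ)
    (hright : ∀ Q ∈ SO3, μ.map (fun R => R * Q) = μ)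
    (s : Fin 3 → ℝ) {p q : Fin 3} (hpq : p ≠ q) :
    ∫ R, Real.exp (Matrix.diagonal s * R).trace * R p q ∂μ = 0 := by
  classical
  set ε : Fin 3 → ℝ := fun m => if m = p then 1 else -1 with hε
  set D : M3 := Matrix.diagonal ε with hD
  have hDD : D * D = 1 := by
    rw [hD, Matrix.diagonal_mul_diagonal]
    have hone : (fun m => ε m * ε m) = fun _ => (1 : ℝ) := by
      funext m
      by_cases h : m = p <;> simp [hε, h]
    rw [hone, Matrix.diagonal_one]
  have hDso3 : D ∈ SO3 := by
    constructor
    · rw [hD, Matrix.diagonal_transpose, ← hD, hDD]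
    · rw [hD, Matrix.det_diagonal]
      fin_cases p <;> simp [hε, Fin.prod_univ_three]
  have hcont : Continuous fun R : M3 => Real.exp (Matrix.diagonal s * R).trace * R p q :=
    (cont_exp_trace s).mul (cont_entry p q)
  have hinv := so3_integral_conj hleft hright hDso3 hDso3
    (fun R => Real.exp (Matrix.diagonal s * R).trace * R p q) hcont.aestronglyMeasurable
  have hconj_entry : ∀ (R : M3) (a b : Fin 3), (D * R * D) a b = ε a * R a b * ε b := by
    intro R a b
    rw [hD, Matrix.mul_diagonal, Matrix.diagonal_mul]
  have htr : ∀ R : M3, (Matrix.diagonal s * (D * R * D)).trace =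
      (Matrix.diagonal s * R).trace := by
    intro R
    rw [trace_diag_mul, trace_diag_mul]
    refine Finset.sum_congr rfl fun m _ => ?_
    rw [hconj_entry R m m]
    by_cases h : m = p <;> simp [hε, h] <;> ring
  have key : ∀ R : M3, Real.exp (Matrix.diagonal s * (D * R * D)).trace * (D * R * D) p q =
      -(Real.exp (Matrix.diagonal s * R).trace * R p q) := by
    intro R
    rw [htr R, hconj_entry R p q]
    have h1 : ε p = 1 := by simp [hε]
    have h2 : ε q = -1 := by simp [hε, hpq.symm]
    rw [h1, h2]
    ring
  simp only [key] at hinv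
  rw [MeasureTheory.integral_neg] at hinv
  linarith [hinv]

lemma so3_transpose {R : M3} (h : R ∈ SO3) : Rᵀ ∈ SO3 := by
  obtain ⟨h1, h2⟩ := h
  constructor
  · rw [Matrix.transpose_transpose]
    rw [mul_eq_one_comm] at h1
    exact h1
  · rw [Matrix.det_transpose]; exact h2

lemma integrable_J (hsupp : μ SO3ᶜ = 0) (s : Fin 3 → ℝ) (p q : Fin 3) :
    Integrable (fun R : M3 => Real.exp (Matrix.diagonal s * R).trace * R p q) μ := by
  refine integrable_of_so3_bound hsupp _
    ((cont_exp_trace s).mul (cont_entry p q)).aestronglyMeasurable (Real.exp (∑ m, |s m|)) ?_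
  intro R hR
  rw [Real.norm_eq_abs, abs_mul, Real.abs_exp, trace_diag_mul]
  have h1 : Real.exp (∑ m, s m * R m m) ≤ Real.exp (∑ m, |s m|) := by
    refine Real.exp_le_exp.2 (Finset.sum_le_sum fun m _ => ?_)
    have hrm := so3_entries hR m m
    calc s m * R m m ≤ |s m * R m m| := le_abs_self _
    _ = |s m| * |R m m| := abs_mul _ _
    _ ≤ |s m| * 1 := by nlinarith [abs_nonneg (s m)]
    _ = |s m| := mul_one _
  have h2 := so3_entries hR p q
  nlinarith [Real.exp_pos (∑ m, s m * R m m), Real.exp_pos (∑ m, |s m|)]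

lemma conj_trace (U V : M3) (hU : U ∈ SO3) (hV : V ∈ SO3) (s : Fin 3 → ℝ) (R : M3) :
    ((U * Matrix.diagonal s * Vᵀ)ᵀ * (U * R * Vᵀ)).trace = (Matrix.diagonal s * R).trace := by
  have hUU : Uᵀ * U = 1 := hU.1
  have hVV : Vᵀ * V = 1 := hV.1
  have key : (U * Matrix.diagonal s * Vᵀ)ᵀ * (U * R * Vᵀ) =
      V * (Matrix.diagonal s * R) * Vᵀ := by
    rw [Matrix.transpose_mul, Matrix.transpose_mul, Matrix.transpose_transpose,
      Matrix.diagonal_transpose]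
    have h2 : V * (Matrix.diagonal s * Uᵀ) * (U * R * Vᵀ) =
        V * Matrix.diagonal s * ((Uᵀ * U) * (R * Vᵀ)) := by noncomm_ring
    rw [h2, hUU, Matrix.one_mul]
    noncomm_ring
  rw [key, Matrix.trace_mul_comm (V * (Matrix.diagonal s * R)) Vᵀ, ← Matrix.mul_assoc, hVV,
    Matrix.one_mul]

lemma conj_entry' (U V : M3) (R : M3) (a b : Fin 3) :
    (U * R * Vᵀ) a b = ∑ p, ∑ q, U a p * V b q * R p q := by
  rw [Matrix.mul_apply]
  simp only [Matrix.mul_apply, Matrix.transpose_apply, Finset.sum_mul]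
  rw [Finset.sum_comm]
  refine Finset.sum_congr rfl fun p _ => Finset.sum_congr rfl fun q _ => by ring

lemma first_moment_entry (hsupp : μ SO3ᶜ = 0)
    (hleft : ∀ Q ∈ SO3, μ.map (fun R => Q * R) = μ)
    (hright : ∀ Q ∈ SO3, μ.map (fun R => R * Q) = μ)
    (U V : M3) (hU : U ∈ SO3) (hV : V ∈ SO3) (s : Fin 3 → ℝ) (a b : Fin 3) :
    ∫ R, Real.exp ((U * Matrix.diagonal s * Vᵀ)ᵀ * R).trace * R a b ∂μ =
      ∑ p, U a p * V b p * (∫ R, Real.exp (Matrix.diagonal s * R).trace * R p p ∂μ) := by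
  have hVt : Vᵀ ∈ SO3 := so3_transpose hV
  have hcont : Continuous fun R : M3 =>
      Real.exp ((U * Matrix.diagonal s * Vᵀ)ᵀ * R).trace * R a b := by
    refine Continuous.mul ?_ (cont_entry a b)
    refine Real.continuous_exp.comp ?_
    exact (continuous_const.matrix_mul continuous_id).matrix_trace
  rw [← so3_integral_conj hleft hright hU hVt _ hcont.aestronglyMeasurable]
  have hpt : ∀ R : M3, Real.exp ((U * Matrix.diagonal s * Vᵀ)ᵀ * (U * R * Vᵀ)).trace *
      (U * R * Vᵀ) a b =
      ∑ p, ∑ q, U a p * V b q * (Real.exp (Matrix.diagonal s * R).trace * R p q) := by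
    intro R
    rw [conj_trace U V hU hV s R, conj_entry' U V R a b, Finset.mul_sum]
    refine Finset.sum_congr rfl fun p _ => ?_
    rw [Finset.mul_sum]
    refine Finset.sum_congr rfl fun q _ => ?_
    ring
  simp only [hpt]
  rw [MeasureTheory.integral_finset_sum _ (fun p _ => ?_)]
  · refine Finset.sum_congr rfl fun p _ => ?_
    rw [MeasureTheory.integral_finset_sum _ (fun q _ => ((integrable_J hsupp s p q).const_mul _))]
    rw [Finset.sum_eq_single p]
    · rw [MeasureTheory.integral_const_mul]
    · intro q _ hq
      rw [MeasureTheory.integral_const_mul, J_offdiag hsupp hleft hright s (Ne.symm hq), mul_zero]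
    · intro h; exact absurd (Finset.mem_univ p) h
  · exact integrable_finset_sum _ (fun q _ => ((integrable_J hsupp s p q).const_mul _))


lemma udv_entry (U V : M3) (g : Fin 3 → ℝ) (a b : Fin 3) :
    (U * Matrix.diagonal g * Vᵀ) a b = ∑ p, U a p * g p * V b p := by
  rw [Matrix.mul_apply]
  refine Finset.sum_congr rfl fun p _ => ?_
  rw [Matrix.mul_diagonal, Matrix.transpose_apply]

lemma uv_entry (U V : M3) (a b : Fin 3) :
    (U * Vᵀ) a b = ∑ p, U a p * V b p := by
  rw [Matrix.mul_apply]
  refine Finset.sum_congr rfl fun p _ => ?_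
  rw [Matrix.transpose_apply]

/-- Moment matching of the unscented transform of the matrix
Fisher distribution.  Let `F = U S Vᵀ` be a proper singular value decomposition
with `s₁ ≥ s₂ ≥ |s₃| ≥ 0`, let `θ₁, θ₂, θ₃ ∈ (0,π)` be arbitrary, define the sigma
points `R₀ = UVᵀ`, `Rᵢ(±θᵢ) = U exp(±θᵢ êᵢ) Vᵀ`, and the weights
`wᵢ = (1/(4(1−cos θᵢ)))·[(1/c(S))(∂c/∂sᵢ − ∂c/∂sⱼ − ∂c/∂sₖ) + 1]` for cyclic
`(i,j,k)`, `w₀ = 1 − 2(w₁+w₂+w₃)`.  Then the weighted first moment of the sigma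
points equals the first moment of `𝓜(F)`:
`w₀R₀ + Σᵢ wᵢ(Rᵢ(θᵢ) + Rᵢ(−θᵢ)) = (1/c(F)) ∫_{SO(3)} R·exp(tr(FᵀR)) dR`. -/
theorem matrixFisher_unscented_moment_match
    (μ : Measure M3) [IsProbabilityMeasure μ] (hsupp : μ SO3ᶜ = 0)
    (hleft : ∀ Q ∈ SO3, μ.map (fun R => Q * R) = μ)
    (hright : ∀ Q ∈ SO3, μ.map (fun R => R * Q) = μ)
    (F U V : M3) (s₁ s₂ s₃ : ℝ)
    (hU : U ∈ SO3) (hV : V ∈ SO3) (h12 : s₁ ≥ s₂) (h23 : s₂ ≥ |s₃|)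
    (hF : F = U * Matrix.diagonal ![s₁, s₂, s₃] * Vᵀ)
    (θ : Fin 3 → ℝ) (hθ : ∀ i, θ i ∈ Set.Ioo (0 : ℝ) Real.pi)
    (d : Fin 3 → ℝ)
    (hd : ∀ m, d m = fderiv ℝ (cFun μ) ![s₁, s₂, s₃] (Pi.single m 1))
    (w : Fin 3 → ℝ)
    (hw : ∀ i : Fin 3, w i =
      (1 / (4 * (1 - Real.cos (θ i)))) *
        ((1 / cFun μ ![s₁, s₂, s₃]) * (d i - d (i + 1) - d (i + 2)) + 1))
    (w₀ : ℝ) (hw₀ : w₀ = 1 - 2 * (w 0 + w 1 + w 2)) :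
    w₀ • (U * Vᵀ) +
        ∑ i : Fin 3,
          w i • (U * NormedSpace.exp (θ i • hat (Pi.single i 1)) * Vᵀ +
            U * NormedSpace.exp ((-θ i) • hat (Pi.single i 1)) * Vᵀ) =
      Matrix.of fun a b : Fin 3 =>
        (1 / mfC μ F) * ∫ R, Real.exp (Fᵀ * R).trace * R a b ∂μ := by
  classical
  set s : Fin 3 → ℝ := ![s₁, s₂, s₃] with hs
  set c : ℝ := cFun μ s with hcdef
  have hVt : Vᵀ ∈ SO3 := so3_transpose hV
  -- the derivatives equal the diagonal first moments
  have hdJ : ∀ m, d m = ∫ R, Real.exp (Matrix.diagonal s * R).trace * R m m ∂μ := by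
    intro m
    rw [hd m, fderiv_cFun_single hsupp s m]
  -- cos θ i ≠ 1
  have hne : ∀ i, 1 - Real.cos (θ i) ≠ 0 := by
    intro i
    have h1 := (hθ i).1
    have h2 := (hθ i).2
    have hlt : Real.cos (θ i) < Real.cos 0 :=
      Real.cos_lt_cos_of_nonneg_of_le_pi le_rfl h2.le h1
    rw [Real.cos_zero] at hlt
    linarith
  -- normalization constants agree
  have hcF : mfC μ F = c := by
    rw [mfC, hF]
    have hcont : Continuous fun R : M3 =>
        Real.exp ((U * Matrix.diagonal s * Vᵀ)ᵀ * R).trace := by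
      refine Real.continuous_exp.comp ?_
      exact (continuous_const.matrix_mul continuous_id).matrix_trace
    rw [← so3_integral_conj hleft hright hU hVt _ hcont.aestronglyMeasurable, hcdef]
    simp only [cFun]
    refine integral_congr_ae (Filter.Eventually.of_forall fun R => ?_)
    show Real.exp ((U * Matrix.diagonal s * Vᵀ)ᵀ * (U * R * Vᵀ)).trace =
      Real.exp (Matrix.diagonal s * R).trace
    rw [conj_trace U V hU hV s R]
  -- the first moment entries
  have hRHS : ∀ a b, (∫ R, Real.exp (Fᵀ * R).trace * R a b ∂μ) =
      ∑ p, U a p * V b p * d p := by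
    intro a b
    rw [hF, first_moment_entry hsupp hleft hright U V hU hV s a b]
    exact Finset.sum_congr rfl fun p _ => by rw [hdJ p]
  -- reduce exp pairs
  have hpair : ∀ i : Fin 3,
      U * NormedSpace.exp (θ i • hat (Pi.single i 1)) * Vᵀ +
        U * NormedSpace.exp ((-θ i) • hat (Pi.single i 1)) * Vᵀ =
      U * Matrix.diagonal
          (fun m => 2 + (2 * (1 - Real.cos (θ i))) * (if m = i then 0 else -1)) * Vᵀ := by
    intro i
    rw [← Matrix.add_mul, ← Matrix.mul_add, exp_hat_sum i (θ i)]
    congr 2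
    ext a b
    by_cases h : a = b
    · subst h
      by_cases h2 : a = i <;>
        simp [Matrix.add_apply, Matrix.smul_apply, Matrix.one_apply, Matrix.diagonal_apply_eq,
          h2, smul_eq_mul]
    · simp [Matrix.add_apply, Matrix.smul_apply, Matrix.one_apply_ne h,
        Matrix.diagonal_apply_ne _ h, smul_eq_mul]
  -- the scalar coefficient identity
  have hcoef : ∀ p : Fin 3,
      w₀ + ∑ i, w i * (2 + (2 * (1 - Real.cos (θ i))) * (if p = i then 0 else -1)) =
      (1 / c) * d p := by
    intro p
    have e0 := hw 0
    have e1 := hw 1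
    have e2 := hw 2
    rw [show ((0:Fin 3)+1 : Fin 3) = 1 by decide, show ((0:Fin 3)+2 : Fin 3) = 2 by decide] at e0
    rw [show ((1:Fin 3)+1 : Fin 3) = 2 by decide, show ((1:Fin 3)+2 : Fin 3) = 0 by decide] at e1
    rw [show ((2:Fin 3)+1 : Fin 3) = 0 by decide, show ((2:Fin 3)+2 : Fin 3) = 1 by decide] at e2
    have k0 : w 0 * (1 - Real.cos (θ 0)) = ((1/c) * (d 0 - d 1 - d 2) + 1)/4 := by
      rw [e0]; field_simp [hne 0]
    have k1 : w 1 * (1 - Real.cos (θ 1)) = ((1/c) * (d 1 - d 2 - d 0) + 1)/4 := by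
      rw [e1]; field_simp [hne 1]
    have k2 : w 2 * (1 - Real.cos (θ 2)) = ((1/c) * (d 2 - d 0 - d 1) + 1)/4 := by
      rw [e2]; field_simp [hne 2]
    fin_cases p
    · show _ = (1/c) * d 0
      simp only [Fin.sum_univ_three, Fin.isValue]
      norm_num [Fin.ext_iff]
      rw [hw₀]
      linear_combination (-2 : ℝ) * k1 - 2 * k2
    · show _ = (1/c) * d 1
      simp only [Fin.sum_univ_three, Fin.isValue]
      norm_num [Fin.ext_iff]
      rw [hw₀]
      linear_combination (-2 : ℝ) * k0 - 2 * k2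
    · show _ = (1/c) * d 2
      simp only [Fin.sum_univ_three, Fin.isValue]
      norm_num [Fin.ext_iff]
      rw [hw₀]
      linear_combination (-2 : ℝ) * k0 - 2 * k1
  -- final assembly
  have hc0 := hcoef 0
  have hc1 := hcoef 1
  have hc2 := hcoef 2
  simp only [Fin.sum_univ_three] at hc0 hc1 hc2
  norm_num [Fin.ext_iff] at hc0 hc1 hc2
  rw [hcF]
  simp only [hpair]
  ext a b
  simp only [Matrix.add_apply, Matrix.smul_apply, Matrix.sum_apply, smul_eq_mul, Matrix.of_apply]
  rw [hRHS a b, uv_entry]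
  simp only [udv_entry]
  simp only [Fin.sum_univ_three]
  norm_num [Fin.ext_iff]
  linear_combination (U a 0 * V b 0) * hc0 + (U a 1 * V b 1) * hc1 + (U a 2 * V b 2) * hc2

end
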